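/- arXiv:1403.8109 — 3 statements merged into one kernel-verified Lean document; each statement's English description precedes it below -/
import Mathlib

section
/- For the cycle graph C_n with n ≥ 3, the minimum over all bijective labelings f : V(C_n) → {1, ..., n} of the maturity weight Σ_{uv ∈ E(C_n)} |f(u) - f(v)| equals 2(n - 1). -/
open scoped Classical

/-- The maturity weight of a graph `G` under a vertex labeling `f`:
the sum over all edges of the absolute difference of endpoint labels. -/
noncomputable def mw {V : Type*} [Fintype V] (G : SimpleGraph V) (f : V → ℕ) : ℕ :=
  ∑ e ∈ G.edgeSet.toFinset,
    Sym2.lift ⟨fun u v => ((f u : ℤ) - (f v : ℤ)).natAbs, fun u v => by dsimp only; omega⟩ e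

section Aux

open SimpleGraph Finset

open Fin.CommRing in
lemma MW.edgeFinset_cycle (m : ℕ)
    [Fintype ((cycleGraph (m+3)).edgeSet : Set (Sym2 (Fin (m+3))))] :
    (cycleGraph (m+3)).edgeSet.toFinset
      = Finset.image (fun i : Fin (m+3) => s(i, i+1)) Finset.univ := by
  ext e
  induction e with
  | h u v =>
    simp only [Set.mem_toFinset, mem_edgeSet, Finset.mem_image, Finset.mem_univ, true_and]
    rw [cycleGraph_adj']
    have h1 : ((1 : Fin (m+3)) : ℕ) = 1 := rfl
    constructor
    · rintro (h | h)
      · refine ⟨v, ?_⟩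
        have : u - v = 1 := Fin.ext (by rw [h1, h])
        rw [Sym2.eq_swap]
        congr 1
        rw [← this]; ring_nf
      · refine ⟨u, ?_⟩
        have : v - u = 1 := Fin.ext (by rw [h1, h])
        congr 1
        rw [← this]; ring_nf
    · rintro ⟨i, hi⟩
      rcases Sym2.eq_iff.mp hi with ⟨rfl, rfl⟩ | ⟨rfl, rfl⟩
      · right; rw [show i + 1 - i = 1 from add_sub_cancel_left i 1]; rfl
      · left; rw [show i + 1 - i = 1 from add_sub_cancel_left i 1]; rfl

lemma MW.inj_cycle (m : ℕ) : Function.Injective (fun i : Fin (m+3) => s(i, i+1)) := by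
  intro i j h
  rcases Sym2.eq_iff.mp h with ⟨rfl, -⟩ | ⟨h1, h2⟩
  · rfl
  · exfalso
    have h0 : i = i + (1 + 1) := by rw [← add_assoc, h2, h1]
    have h2' : (1 + 1 : Fin (m+3)) = 0 := left_eq_add.mp h0
    have hv := congrArg Fin.val h2'
    simp [Fin.val_add] at hv
    rw [Nat.mod_eq_of_lt (by omega)] at hv
    exact two_ne_zero hv

lemma MW.mw_cycle (m : ℕ) (f : Fin (m+3) → ℕ) :
    mw (cycleGraph (m+3)) f = ∑ i : Fin (m+3), ((f i : ℤ) - f (i+1)).natAbs := by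
  rw [mw, MW.edgeFinset_cycle, Finset.sum_image (fun a _ b _ h => MW.inj_cycle m h)]
  simp

open Fin.NatCast Fin.CommRing in
lemma MW.cycle_bool (m : ℕ) (b : Fin (m+3) → Bool) (hne : ∃ i j, b i ≠ b j) :
    2 ≤ (Finset.univ.filter (fun i : Fin (m+3) => b i ≠ b (i+1))).card := by
  set c := (Finset.univ.filter (fun i : Fin (m+3) => b i ≠ b (i+1))).card with hc
  have hpos : c ≠ 0 := by
    intro h0
    rw [hc, Finset.card_eq_zero, Finset.filter_eq_empty_iff] at h0
    have hstep : ∀ i : Fin (m+3), b (i+1) = b i := by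
      intro i
      have := h0 (Finset.mem_univ i)
      simp only [ne_eq, not_not] at this
      exact this.symm
    have hconst : ∀ i : Fin (m+3), b i = b 0 := by
      have key : ∀ v : ℕ, b ((v : Fin (m+3))) = b 0 := by
        intro v
        induction v with
        | zero => simp
        | succ v ih =>
          have h1 : ((v+1 : ℕ) : Fin (m+3)) = (v : Fin (m+3)) + 1 := by push_cast; ring
          rw [h1, hstep, ih]
      intro i
      have := key i.val
      rwa [Fin.cast_val_eq_self] at this
    obtain ⟨i, j, hij⟩ := hne
    exact hij ((hconst i).trans (hconst j).symm)
  have heven : 2 ∣ c := by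
    have hcast : (c : ZMod 2) = 0 := by
      rw [hc, Finset.card_filter, Nat.cast_sum]
      have hterm : ∀ i : Fin (m+3),
          (((if b i ≠ b (i+1) then 1 else 0 : ℕ)) : ZMod 2)
            = (if b i then (1:ZMod 2) else 0) + (if b (i+1) then 1 else 0) := by
        intro i
        cases hbi : b i <;> cases hbj : b (i+1) <;> (simp [hbi, hbj]; try decide)
      rw [Finset.sum_congr rfl (fun i _ => hterm i), Finset.sum_add_distrib]
      have hshift : ∑ i : Fin (m+3), (if b (i+1) then (1:ZMod 2) else 0)
          = ∑ i : Fin (m+3), (if b i then (1:ZMod 2) else 0) :=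
        Fintype.sum_equiv (Equiv.addRight 1) _ _ (fun i => rfl)
      rw [hshift]
      exact CharTwo.add_self_eq_zero _
    exact (ZMod.natCast_eq_zero_iff c 2).mp hcast
  omega

lemma MW.natAbs_eq_card {n a b : ℕ} (ha1 : 1 ≤ a) (han : a ≤ n) (hb1 : 1 ≤ b) (hbn : b ≤ n) :
    ((a:ℤ) - b).natAbs
      = ((Finset.Ico 1 n).filter (fun k => (a ≤ k) ≠ (b ≤ k))).card := by
  have hEq : ((Finset.Ico 1 n).filter (fun k => (a ≤ k) ≠ (b ≤ k)))
      = Finset.Ico (min a b) (max a b) := by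
    ext k
    simp only [Finset.mem_filter, Finset.mem_Ico, ne_eq, eq_iff_iff]
    by_cases hak : a ≤ k <;> by_cases hbk : b ≤ k <;> simp [hak, hbk] <;> omega
  rw [hEq, Nat.card_Ico]
  omega

end Aux

theorem stmt_10 {n : ℕ} (hn : 3 ≤ n) :
    IsLeast {m | ∃ f : Fin n ≃ Fin n,
      mw (SimpleGraph.cycleGraph n) (fun v => (f v : ℕ) + 1) = m} (2 * (n - 1)) := by
  obtain ⟨m, rfl⟩ : ∃ m, n = m + 3 := ⟨n - 3, by omega⟩
  constructor
  · -- membership: identity labeling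
    refine ⟨Equiv.refl _, ?_⟩
    rw [MW.mw_cycle]
    simp only [Equiv.refl_apply]
    have hterm : ∀ i : Fin (m+3),
        ((((i : ℕ) + 1 : ℕ) : ℤ) - ((((i+1 : Fin (m+3)) : ℕ) + 1 : ℕ) : ℤ)).natAbs
          = (if i = Fin.last (m+2) then (m+1) else 0) + 1 := by
      intro i
      rw [Fin.val_add_one]
      by_cases hi : i = Fin.last (m+2)
      · simp only [hi, if_pos, Fin.val_last]
        push_cast
        omega
      · simp only [hi, if_neg, ite_false]
        push_cast
        omega
    rw [Finset.sum_congr rfl (fun i _ => hterm i), Finset.sum_add_distrib,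
      Finset.sum_ite_eq' Finset.univ (Fin.last (m+2)) (fun _ => m+1)]
    simp only [Finset.mem_univ, if_pos, Finset.sum_const, Finset.card_univ,
      Fintype.card_fin, smul_eq_mul, mul_one]
    omega
  · -- lower bound
    rintro M ⟨f, rfl⟩
    set g : Fin (m+3) → ℕ := fun v => (f v : ℕ) + 1 with hg
    have hg1 : ∀ i, 1 ≤ g i := fun i => by simp [hg]
    have hgn : ∀ i, g i ≤ m + 3 := fun i => by
      have := (f i).isLt; simp [hg]; omega
    rw [MW.mw_cycle]
    have hstep1 : ∀ i : Fin (m+3), ((g i : ℤ) - g (i+1)).natAbs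
        = ((Finset.Ico 1 (m+3)).filter (fun k => (g i ≤ k) ≠ (g (i+1) ≤ k))).card :=
      fun i => MW.natAbs_eq_card (hg1 i) (hgn i) (hg1 (i+1)) (hgn (i+1))
    rw [Finset.sum_congr rfl (fun i _ => hstep1 i)]
    have hswap : ∑ i : Fin (m+3),
        ((Finset.Ico 1 (m+3)).filter (fun k => (g i ≤ k) ≠ (g (i+1) ≤ k))).card
        = ∑ k ∈ Finset.Ico 1 (m+3),
            (Finset.univ.filter (fun i : Fin (m+3) => (g i ≤ k) ≠ (g (i+1) ≤ k))).card := by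
      simp only [Finset.card_filter]
      rw [Finset.sum_comm]
    rw [hswap]
    have hbound : ∀ k ∈ Finset.Ico 1 (m+3),
        2 ≤ (Finset.univ.filter (fun i : Fin (m+3) => (g i ≤ k) ≠ (g (i+1) ≤ k))).card := by
      intro k hk
      rw [Finset.mem_Ico] at hk
      have hfilter : (Finset.univ.filter (fun i : Fin (m+3) => (g i ≤ k) ≠ (g (i+1) ≤ k)))
          = (Finset.univ.filter (fun i : Fin (m+3) => decide (g i ≤ k) ≠ decide (g (i+1) ≤ k))) := by
        apply Finset.filter_congr
        intro i _
        simp [decide_eq_decide, eq_iff_iff]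
      rw [hfilter]
      apply MW.cycle_bool
      refine ⟨f.symm 0, f.symm (Fin.last (m+2)), ?_⟩
      have hv1 : g (f.symm 0) = 1 := by simp [hg]
      have hv2 : g (f.symm (Fin.last (m+2))) = m + 3 := by simp [hg]
      rw [hv1, hv2]
      simp only [ne_eq, decide_eq_decide]
      intro h
      have := h.mp hk.1
      omega
    calc 2 * (m + 3 - 1) = ∑ _k ∈ Finset.Ico 1 (m+3), 2 := by
          rw [Finset.sum_const, Nat.card_Ico, smul_eq_mul]; omega
      _ ≤ _ := Finset.sum_le_sum hbound
end

section
/- For n ≥ 3, the maximum over all bijective labelings of the maturity weight of the cycle C_n equals the maximum over all bijective labelings of the maturity weight of the path P_n plus 1; that is, max_f Σ_{uv ∈ E(C_n)} |f(u) - f(v)| = (⌊n²/2⌋ - 1) + 1 = ⌊n²/2⌋. -/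
open scoped Classical

set_option linter.unusedSectionVars false

lemma sum_min' (n : ℕ) : ∑ s ∈ Finset.range n, 2 * min s (n - s) = n^2/2 := by
  induction n with
  | zero => simp
  | succ n ih =>
    rcases Nat.eq_zero_or_pos n with h0 | h0
    · subst h0; simp
    have step : ∀ s ∈ Finset.range n,
        2 * min s (n + 1 - s) = 2 * min s (n - s) + (if n < 2*s then 2 else 0) := by
      intro s hs
      simp only [Finset.mem_range] at hs
      split_ifs <;> omega
    rw [Finset.sum_range_succ, Finset.sum_congr rfl step, Finset.sum_add_distrib, ih]
    have hcard : ∑ x ∈ Finset.range n, (if n < 2*x then 2 else 0)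
        = 2 * ((Finset.range n).filter (fun x => n < 2*x)).card := by
      rw [Finset.sum_ite, Finset.sum_const, Finset.sum_const]
      simp [Nat.mul_comm]
    have hset : (Finset.range n).filter (fun x => n < 2*x) = Finset.Ico (n/2+1) n := by
      ext x
      simp only [Finset.mem_filter, Finset.mem_range, Finset.mem_Ico]
      omega
    rw [hcard, hset, Nat.card_Ico]
    have h2 : min n (n+1-n) = 1 := by omega
    rw [h2]
    obtain ⟨k, hk | hk⟩ := Nat.even_or_odd' n <;> subst hk <;> ring_nf <;> omega

lemma mw_eq_sum {V : Type*} [Fintype V] (G : SimpleGraph V) (l : V → ℕ)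
    (s : Finset (Sym2 V)) (h : G.edgeSet = ↑s) :
    mw G l = ∑ e ∈ s,
      Sym2.lift ⟨fun u v => ((l u : ℤ) - (l v : ℤ)).natAbs, fun u v => by dsimp only; omega⟩ e := by
  unfold mw
  congr 1
  apply Finset.coe_injective
  rw [Set.coe_toFinset, h]

/-- The zigzag labeling on `Fin n`. -/
def pvN (n i : ℕ) : ℕ := if 2 ∣ i then i / 2 else n - 1 - i / 2

/-- The zigzag permutation on `Fin n`. -/
def pEquiv (n : ℕ) [NeZero n] : Fin n ≃ Fin n where
  toFun i := ⟨pvN n i.val, by have := i.isLt; unfold pvN; split <;> omega⟩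
  invFun v := ⟨if 2 * v.val < n then 2 * v.val else 2 * (n - 1 - v.val) + 1,
    by have := v.isLt; split <;> omega⟩
  left_inv := by
    intro i
    have hi := i.isLt
    apply Fin.ext
    simp only [pvN]
    split_ifs <;> omega
  right_inv := by
    intro v
    have hv := v.isLt
    apply Fin.ext
    simp only [pvN]
    split_ifs <;> omega

section
variable {n : ℕ} [NeZero n] (hn : 3 ≤ n)
include hn

lemma val_one3 : ((1 : Fin n)).val = 1 := by
  rw [Fin.val_one' n]; exact Nat.mod_eq_of_lt (by omega)

lemma val_add_one (i : Fin n) : ((i+1 : Fin n)).val = (i.val + 1) % n := by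
  rw [Fin.val_add, val_one3 hn]

lemma eq_add_one_of {u v : Fin n} (h : (v - u).val = 1) : v = u + 1 := by
  have h1 : v - u = 1 := by apply Fin.ext; rw [h, val_one3 hn]
  rw [sub_eq_iff_eq_add] at h1
  rw [h1]; exact add_comm _ _

lemma cycle_edgeSet' :
    (SimpleGraph.cycleGraph n).edgeSet
      = ↑(Finset.univ.image (fun i : Fin n => s(i, i+1))) := by
  ext e
  induction e with
  | _ u v =>
    simp only [SimpleGraph.mem_edgeSet, Finset.coe_image, Finset.coe_univ, Set.image_univ,
      Set.mem_range, SimpleGraph.cycleGraph_adj']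
    constructor
    · rintro (h | h)
      · exact ⟨v, by rw [← eq_add_one_of hn h, Sym2.eq_swap]⟩
      · exact ⟨u, by rw [← eq_add_one_of hn h]⟩
    · rintro ⟨i, hi⟩
      rw [Sym2.eq_iff] at hi
      have hadj : ∀ w : Fin n, ((w + 1 - w : Fin n)).val = 1 := by
        intro w; rw [add_sub_cancel_left, val_one3 hn]
      rcases hi with ⟨h1, h2⟩ | ⟨h1, h2⟩
      · right; rw [← h2, ← h1]; exact hadj i
      · left; rw [← h2, ← h1]; exact hadj i

lemma cycle_pair_injective : Function.Injective (fun i : Fin n => s(i, (i+1 : Fin n))) := by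
  intro i j hij
  simp only [Sym2.eq_iff] at hij
  rcases hij with ⟨h, _⟩ | ⟨h1, h2⟩
  · exact h
  · exfalso
    have h3 : i = i + 1 + 1 := by rw [h2, h1]
    rw [add_assoc] at h3
    have h5 : ((1 : Fin n) + 1) = 0 := left_eq_add.mp h3
    have h4 := congrArg Fin.val h5
    rw [val_add_one hn, val_one3 hn, Fin.val_zero] at h4
    rw [Nat.mod_eq_of_lt (by omega)] at h4
    omega

lemma mw_cycle_eq (l : Fin n → ℕ) :
    mw (SimpleGraph.cycleGraph n) l
      = ∑ i : Fin n, ((l i : ℤ) - (l (i+1) : ℤ)).natAbs := by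
  rw [mw_eq_sum _ _ _ (cycle_edgeSet' hn),
    Finset.sum_image (fun i _ j _ h => cycle_pair_injective hn h)]
  simp

lemma path_edgeSet' :
    (SimpleGraph.pathGraph n).edgeSet
      = ↑((Finset.univ.filter (fun i : Fin n => i.val + 1 < n)).image
          (fun i => s(i, i+1))) := by
  ext e
  induction e with
  | _ u v =>
    simp only [SimpleGraph.mem_edgeSet, SimpleGraph.pathGraph_adj, Finset.coe_image,
      Set.mem_image, Finset.mem_coe, Finset.mem_filter, Finset.mem_univ, true_and]
    constructor
    · rintro (h | h)
      · refine ⟨u, by omega, ?_⟩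
        have : u + 1 = v := by
          apply Fin.ext; rw [val_add_one hn, Nat.mod_eq_of_lt (by omega), h]
        rw [this]
      · refine ⟨v, by omega, ?_⟩
        have : v + 1 = u := by
          apply Fin.ext; rw [val_add_one hn, Nat.mod_eq_of_lt (by omega), h]
        rw [this, Sym2.eq_swap]
    · rintro ⟨i, hi, he⟩
      have hv : ((i+1 : Fin n)).val = i.val + 1 := by
        rw [val_add_one hn, Nat.mod_eq_of_lt (by omega)]
      rw [Sym2.eq_iff] at he
      rcases he with ⟨h1, h2⟩ | ⟨h1, h2⟩
      · left; rw [← h1, ← h2, hv]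
      · right; rw [← h1, ← h2, hv]

lemma mw_path_eq (l : Fin n → ℕ) :
    mw (SimpleGraph.pathGraph n) l
      = ∑ i ∈ Finset.univ.filter (fun i : Fin n => i.val + 1 < n),
          ((l i : ℤ) - (l (i+1) : ℤ)).natAbs := by
  rw [mw_eq_sum _ _ _ (path_edgeSet' hn),
    Finset.sum_image (fun i _ j _ h => cycle_pair_injective hn h)]
  simp

lemma mw_cycle_split (l : Fin n → ℕ) :
    mw (SimpleGraph.cycleGraph n) l
      = mw (SimpleGraph.pathGraph n) l
        + ((l ⟨n-1, by omega⟩ : ℤ) - (l 0 : ℤ)).natAbs := by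
  rw [mw_cycle_eq hn, mw_path_eq hn]
  rw [← Finset.sum_filter_add_sum_filter_not Finset.univ (fun i : Fin n => i.val + 1 < n)]
  congr 1
  have hset : Finset.univ.filter (fun i : Fin n => ¬ (i.val + 1 < n))
      = {(⟨n-1, by omega⟩ : Fin n)} := by
    ext i
    simp only [Finset.mem_filter, Finset.mem_univ, true_and, Finset.mem_singleton, Fin.ext_iff]
    have := i.isLt
    omega
  rw [hset, Finset.sum_singleton]
  have h0 : ((⟨n-1, by omega⟩ : Fin n) + 1) = 0 := by
    apply Fin.ext
    rw [val_add_one hn]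
    simp only [Fin.val_zero]
    have he : n - 1 + 1 = n := by omega
    rw [he, Nat.mod_self]
  rw [h0]

lemma card_le_filter_le (t : ℕ) (ht : t < n) (f : Fin n ≃ Fin n) :
    (Finset.univ.filter (fun v : Fin n => (f v : ℕ) ≤ t)).card = t + 1 := by
  have h1 : (Finset.univ.filter (fun v : Fin n => (f v : ℕ) ≤ t)).card
      = (Finset.univ.filter (fun v : Fin n => (v : ℕ) ≤ t)).card := by
    apply Finset.card_equiv f
    intro i
    simp
  rw [h1]
  have h2 : (Finset.univ.filter (fun v : Fin n => (v : ℕ) ≤ t)) = Finset.Iic ⟨t, ht⟩ := by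
    ext v
    simp [Fin.le_def]
  rw [h2, Fin.card_Iic]

lemma cut_bound (t : ℕ) (ht : t < n - 1) (f : Fin n ≃ Fin n) :
    (Finset.univ.filter (fun i : Fin n =>
        ((f i : ℕ) ≤ t ∧ t < (f (i+1) : ℕ)) ∨ ((f (i+1) : ℕ) ≤ t ∧ t < (f i : ℕ)))).card
      ≤ 2 * min (t+1) (n-1-t) := by
  set X := Finset.univ.filter (fun i : Fin n =>
      ((f i : ℕ) ≤ t ∧ t < (f (i+1) : ℕ)) ∨ ((f (i+1) : ℕ) ≤ t ∧ t < (f i : ℕ))) with hX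
  have fiber2 : ∀ (g : Fin n → Fin n), (∀ i, g i = i ∨ g i = i + 1) →
      X.card ≤ 2 * (X.image g).card := by
    intro g hg
    apply Finset.card_le_mul_card_image
    intro b _
    have hsub : (X.filter fun i => g i = b) ⊆ {b, b - 1} := by
      intro i hi
      simp only [Finset.mem_filter] at hi
      rcases hg i with h | h
      · simp [← h.symm.trans hi.2]
      · have : i = b - 1 := by rw [← hi.2, h, add_sub_cancel_right]
        simp [this]
    exact (Finset.card_le_card hsub).trans ((Finset.card_insert_le _ _).trans (by simp))
  have bound1 : X.card ≤ 2 * (t + 1) := by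
    have := fiber2 (fun i => if (f i : ℕ) ≤ t then i else i + 1)
      (by intro i; split <;> simp)
    refine this.trans (Nat.mul_le_mul_left 2 ?_)
    rw [← card_le_filter_le hn t (by omega) f]
    apply Finset.card_le_card
    intro v hv
    simp only [Finset.mem_image, hX, Finset.mem_filter, Finset.mem_univ, true_and] at hv ⊢
    obtain ⟨i, hi, hiv⟩ := hv
    split at hiv
    · subst hiv; omega
    · subst hiv; omega
  have bound2 : X.card ≤ 2 * (n - 1 - t) := by
    have := fiber2 (fun i => if t < (f i : ℕ) then i else i + 1)
      (by intro i; split <;> simp)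
    refine this.trans (Nat.mul_le_mul_left 2 ?_)
    have hcc : (Finset.univ.filter (fun v : Fin n => t < (f v : ℕ))).card = n - 1 - t := by
      have := card_le_filter_le hn t (by omega) f
      have hcompl : Finset.univ.filter (fun v : Fin n => t < (f v : ℕ))
          = (Finset.univ.filter (fun v : Fin n => (f v : ℕ) ≤ t))ᶜ := by
        ext v
        simp only [Finset.mem_filter, Finset.mem_univ, true_and, Finset.mem_compl, not_le]
      rw [hcompl, Finset.card_compl, this]
      simp only [Fintype.card_fin]
      omega
    rw [← hcc]
    apply Finset.card_le_card
    intro v hv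
    simp only [Finset.mem_image, hX, Finset.mem_filter, Finset.mem_univ, true_and] at hv ⊢
    obtain ⟨i, hi, hiv⟩ := hv
    split at hiv
    · subst hiv; omega
    · subst hiv; omega
  omega

lemma cycle_sum_le (f : Fin n ≃ Fin n) :
    ∑ i : Fin n, (((f i : ℕ) : ℤ) - ((f (i+1) : ℕ) : ℤ)).natAbs ≤ n^2/2 := by
  have habs : ∀ i : Fin n, (((f i : ℕ) : ℤ) - ((f (i+1) : ℕ) : ℤ)).natAbs
      = ((Finset.range (n-1)).filter (fun t =>
          ((f i : ℕ) ≤ t ∧ t < (f (i+1) : ℕ)) ∨ ((f (i+1) : ℕ) ≤ t ∧ t < (f i : ℕ)))).card := by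
    intro i
    have hx : (f i : ℕ) < n := (f i).isLt
    have hy : (f (i+1) : ℕ) < n := (f (i+1)).isLt
    have : (Finset.range (n-1)).filter (fun t =>
          ((f i : ℕ) ≤ t ∧ t < (f (i+1) : ℕ)) ∨ ((f (i+1) : ℕ) ≤ t ∧ t < (f i : ℕ)))
        = Finset.Ico (min (f i : ℕ) (f (i+1) : ℕ)) (max (f i : ℕ) (f (i+1) : ℕ)) := by
      ext u
      simp only [Finset.mem_filter, Finset.mem_range, Finset.mem_Ico, le_min_iff, min_le_iff,
        lt_max_iff, max_lt_iff, inf_le_iff, Nat.min_def, Nat.max_def]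
      split <;> omega
    rw [this, Nat.card_Ico]
    omega
  calc ∑ i : Fin n, (((f i : ℕ) : ℤ) - ((f (i+1) : ℕ) : ℤ)).natAbs
      = ∑ i : Fin n, ∑ t ∈ Finset.range (n-1),
          (if ((f i : ℕ) ≤ t ∧ t < (f (i+1) : ℕ)) ∨ ((f (i+1) : ℕ) ≤ t ∧ t < (f i : ℕ))
            then 1 else 0) := by
        refine Finset.sum_congr rfl fun i _ => ?_
        rw [habs i, Finset.card_filter]
    _ = ∑ t ∈ Finset.range (n-1), ∑ i : Fin n,
          (if ((f i : ℕ) ≤ t ∧ t < (f (i+1) : ℕ)) ∨ ((f (i+1) : ℕ) ≤ t ∧ t < (f i : ℕ))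
            then 1 else 0) := Finset.sum_comm
    _ ≤ ∑ t ∈ Finset.range (n-1), 2 * min (t+1) (n-1-t) := by
        refine Finset.sum_le_sum fun t htt => ?_
        rw [← Finset.card_filter]
        exact cut_bound hn t (Finset.mem_range.mp htt) f
    _ = n^2/2 := by
        have hrw : ∀ t ∈ Finset.range (n-1),
            2 * min (t+1) (n-1-t) = 2 * min (t+1) (n-(t+1)) := by
          intro t ht; congr 1; omega
        rw [Finset.sum_congr rfl hrw]
        rw [← sum_min' n]
        obtain ⟨m, rfl⟩ : ∃ m, n = m + 1 := ⟨n-1, by omega⟩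
        simp only [Nat.add_sub_cancel]
        rw [Finset.sum_range_succ']
        simp

lemma pv_succ_diff {k : ℕ} (hk : k < n - 1) :
    ((pvN n k : ℤ) - (pvN n (k+1) : ℤ)).natAbs = n - 1 - k := by
  unfold pvN
  split_ifs <;> omega

lemma cycle_sum_p :
    ∑ i : Fin n, (((pEquiv n i : ℕ) : ℤ) - ((pEquiv n (i+1) : ℕ) : ℤ)).natAbs = n^2/2 := by
  have hterm : ∀ i : Fin n, (((pEquiv n i : ℕ) : ℤ) - ((pEquiv n (i+1) : ℕ) : ℤ)).natAbs
      = (fun k => ((pvN n k : ℤ) - (pvN n ((k+1) % n) : ℤ)).natAbs) i.val := by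
    intro i
    show ((pvN n i.val : ℤ) - (pvN n ((i+1 : Fin n)).val : ℤ)).natAbs = _
    rw [val_add_one hn]
  rw [Finset.sum_congr rfl (fun i _ => hterm i),
    Fin.sum_univ_eq_sum_range (fun k => ((pvN n k : ℤ) - (pvN n ((k+1) % n) : ℤ)).natAbs) n]
  obtain ⟨m, rfl⟩ : ∃ m, n = m + 1 := ⟨n-1, by omega⟩
  rw [Finset.sum_range_succ]
  have hlast : (((pvN (m+1) m : ℤ)) - (pvN (m+1) ((m+1) % (m+1)) : ℤ)).natAbs
      = pvN (m+1) m := by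
    rw [Nat.mod_self]
    unfold pvN
    split_ifs <;> omega
  have hmain : ∀ k ∈ Finset.range m,
      ((pvN (m+1) k : ℤ) - (pvN (m+1) ((k+1) % (m+1)) : ℤ)).natAbs = m - k := by
    intro k hk
    simp only [Finset.mem_range] at hk
    rw [Nat.mod_eq_of_lt (by omega)]
    have := pv_succ_diff (n := m+1) hn (k := k) (by omega)
    simpa using this
  rw [hlast, Finset.sum_congr rfl hmain]
  have hrefl : ∑ k ∈ Finset.range m, (m - k) = ∑ j ∈ Finset.range m, (j + 1) := by
    rw [← Finset.sum_range_reflect]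
    refine Finset.sum_congr rfl fun j hj => ?_
    simp only [Finset.mem_range] at hj
    omega
  rw [hrefl, Finset.sum_add_distrib, Finset.sum_const, Finset.card_range, smul_eq_mul, mul_one]
  have hgauss := Finset.sum_range_id_mul_two m
  have hsq : (m+1)^2 = m * (m-1) + 3 * m + 1 := by
    obtain ⟨m', rfl⟩ : ∃ m', m = m' + 1 := ⟨m-1, by omega⟩
    simp only [Nat.add_sub_cancel]
    ring
  unfold pvN
  split_ifs <;> omega

end

theorem stmt_11 {n : ℕ} (hn : 3 ≤ n) :
    IsGreatest {m | ∃ f : Fin n ≃ Fin n,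
      mw (SimpleGraph.cycleGraph n) (fun v => (f v : ℕ) + 1) = m} ((n ^ 2 / 2 - 1) + 1) ∧
    IsGreatest {m | ∃ f : Fin n ≃ Fin n,
      mw (SimpleGraph.pathGraph n) (fun v => (f v : ℕ) + 1) = m} (n ^ 2 / 2 - 1) ∧
    (n ^ 2 / 2 - 1) + 1 = n ^ 2 / 2 := by
  haveI : NeZero n := ⟨by omega⟩
  have h9 : 9 ≤ n^2 := by nlinarith
  have hge : 4 ≤ n^2/2 := by omega
  -- stripping the +1 from labels
  have hstrip : ∀ (f : Fin n ≃ Fin n) (G : SimpleGraph (Fin n)) (s : Finset (Fin n)),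
      (∑ i ∈ s, ((((f i : ℕ) + 1 : ℕ) : ℤ) - (((f (i+1) : ℕ) + 1 : ℕ) : ℤ)).natAbs)
        = ∑ i ∈ s, (((f i : ℕ) : ℤ) - ((f (i+1) : ℕ) : ℤ)).natAbs := by
    intro f G s
    refine Finset.sum_congr rfl fun i _ => ?_
    push_cast
    omega
  -- mw of cycle with +1 labels
  have hmwc : ∀ f : Fin n ≃ Fin n,
      mw (SimpleGraph.cycleGraph n) (fun v => (f v : ℕ) + 1)
        = ∑ i : Fin n, (((f i : ℕ) : ℤ) - ((f (i+1) : ℕ) : ℤ)).natAbs := by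
    intro f
    rw [mw_cycle_eq hn]
    exact hstrip f (SimpleGraph.cycleGraph n) Finset.univ
  -- the wrap edge weight
  set last : Fin n := ⟨n-1, by omega⟩ with hlastdef
  have hsplit : ∀ f : Fin n ≃ Fin n,
      mw (SimpleGraph.cycleGraph n) (fun v => (f v : ℕ) + 1)
        = mw (SimpleGraph.pathGraph n) (fun v => (f v : ℕ) + 1)
          + ((((f last : ℕ) + 1 : ℕ) : ℤ) - (((f 0 : ℕ) + 1 : ℕ) : ℤ)).natAbs := by
    intro f
    exact mw_cycle_split hn _
  have hwrap_pos : ∀ f : Fin n ≃ Fin n,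
      1 ≤ ((((f last : ℕ) + 1 : ℕ) : ℤ) - (((f 0 : ℕ) + 1 : ℕ) : ℤ)).natAbs := by
    intro f
    have hne : (f last : ℕ) ≠ (f 0 : ℕ) := by
      intro h
      have : last = 0 := f.injective (Fin.ext h)
      have := congrArg Fin.val this
      simp [hlastdef] at this
      omega
    omega
  -- cycle upper bound with +1 labels
  have hcub : ∀ f : Fin n ≃ Fin n,
      mw (SimpleGraph.cycleGraph n) (fun v => (f v : ℕ) + 1) ≤ n^2/2 := by
    intro f
    rw [hmwc f]
    exact cycle_sum_le hn f
  -- the optimal cycle labeling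
  have hcyc_p : mw (SimpleGraph.cycleGraph n) (fun v => (pEquiv n v : ℕ) + 1) = n^2/2 := by
    rw [hmwc (pEquiv n)]
    exact cycle_sum_p hn
  -- the optimal path labeling : rotate by one
  set f' : Fin n ≃ Fin n := (Equiv.subRight (1 : Fin n)).trans (pEquiv n) with hf'def
  have hf'app : ∀ i : Fin n, f' i = pEquiv n (i - 1) := fun i => rfl
  have hcyc_p' : mw (SimpleGraph.cycleGraph n) (fun v => (f' v : ℕ) + 1) = n^2/2 := by
    rw [hmwc f']
    have : ∀ i : Fin n,
        (((f' i : ℕ) : ℤ) - ((f' (i+1) : ℕ) : ℤ)).natAbs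
          = (fun j : Fin n =>
              (((pEquiv n j : ℕ) : ℤ) - ((pEquiv n (j+1) : ℕ) : ℤ)).natAbs)
            ((Equiv.subRight (1 : Fin n)) i) := by
      intro i
      simp only [Equiv.subRight_apply, hf'app]
      congr 3
      rw [sub_add_eq_add_sub]
    rw [Finset.sum_congr rfl (fun i _ => this i)]
    exact (Equiv.sum_comp (Equiv.subRight (1 : Fin n))
      (fun j : Fin n => (((pEquiv n j : ℕ) : ℤ) - ((pEquiv n (j+1) : ℕ) : ℤ)).natAbs)).trans
      (cycle_sum_p hn)
  have hlast_sub : last - 1 = (⟨n-2, by omega⟩ : Fin n) := by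
    have : (⟨n-2, by omega⟩ : Fin n) + 1 = last := by
      apply Fin.ext
      rw [val_add_one hn]
      simp only [hlastdef]
      rw [Nat.mod_eq_of_lt (by omega)]
      omega
    rw [← this, add_sub_cancel_right]
  have hzero_sub : (0 : Fin n) - 1 = last := by
    have h0 : last + 1 = 0 := by
      apply Fin.ext
      rw [val_add_one hn]
      simp only [hlastdef, Fin.val_zero]
      have he : n - 1 + 1 = n := by omega
      rw [he, Nat.mod_self]
    rw [← h0, add_sub_cancel_right]
  have hwrap_p' : ((((f' last : ℕ) + 1 : ℕ) : ℤ) - (((f' 0 : ℕ) + 1 : ℕ) : ℤ)).natAbs = 1 := by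
    rw [hf'app, hf'app, hlast_sub, hzero_sub]
    have e1 : (pEquiv n ⟨n-2, by omega⟩ : ℕ) = pvN n (n-2) := rfl
    have e2 : (pEquiv n last : ℕ) = pvN n (n-1) := rfl
    rw [e1, e2]
    have := pv_succ_diff (n := n) hn (k := n-2) (by omega)
    have he : n - 2 + 1 = n - 1 := by omega
    rw [he] at this
    push_cast
    omega
  have hpath_p' : mw (SimpleGraph.pathGraph n) (fun v => (f' v : ℕ) + 1) = n^2/2 - 1 := by
    have := hsplit f'
    rw [hcyc_p', hwrap_p'] at this
    omega
  refine ⟨⟨⟨pEquiv n, by omega⟩, ?_⟩, ⟨⟨f', hpath_p'⟩, ?_⟩, by omega⟩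
  · rintro m ⟨f, rfl⟩
    have := hcub f
    omega
  · rintro m ⟨f, rfl⟩
    have h1 := hsplit f
    have h2 := hwrap_pos f
    have h3 := hcub f
    omega
end

section
/- For the star graph K_{1,n} with n ≥ 2, the minimum over all bijective labelings f : V(K_{1,n}) → {1, ..., n+1} of the maturity weight Σ_{uv ∈ E(K_{1,n})} |f(u) - f(v)| equals ⌊(n+1)²/4⌋; explicitly, it equals 2·Σ_{i=1}^{⌈(n+1)/2⌉-1} i + ⌈(n+1)/2⌉ when n is odd, and 2·Σ_{i=1}^{⌈(n+1)/2⌉-1} i when n is even. -/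
open scoped Classical

open Finset in
private lemma sum_desc' (c : ℕ) (m : ℕ) :
    2 * ∑ k ∈ range m, ((c:ℤ) - k) = 2*m*c - m*(m-1) := by
  induction m with
  | zero => simp
  | succ m ih =>
    rw [Finset.sum_range_succ, mul_add, ih]
    push_cast
    ring

open Finset in
private lemma key' (c N : ℕ) (h : c ≤ N) :
    2 * ∑ k ∈ range (N+1), |(c:ℤ) - k| = c*(c+1) + ((N:ℤ)-c)*((N:ℤ)-c+1) := by
  induction N with
  | zero =>
    interval_cases c
    simp
  | succ N ih =>
    rcases Nat.lt_or_ge c (N+1) with hc | hc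
    · have hc' : c ≤ N := Nat.lt_succ_iff.mp hc
      rw [Finset.sum_range_succ, mul_add, ih hc']
      have : |(c:ℤ) - (N+1 : ℕ)| = (N:ℤ)+1-c := by
        rw [abs_of_nonpos (by push_cast; omega)]
        push_cast; ring
      rw [this]
      push_cast
      ring
    · have hc' : c = N+1 := le_antisymm h hc
      subst hc'
      have : ∑ k ∈ range (N+1+1), |((N+1:ℕ):ℤ) - k| = ∑ k ∈ range (N+1+1), (((N+1:ℕ):ℤ) - k) := by
        apply Finset.sum_congr rfl
        intro k hk
        rw [Finset.mem_range] at hk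
        rw [abs_of_nonneg (by push_cast; omega)]
      rw [this, sum_desc']
      push_cast
      ring

private lemma gauss2' (t : ℕ) : 2 * ∑ i ∈ Finset.Icc 1 t, i = t * (t+1) := by
  induction t with
  | zero => simp
  | succ t ih =>
    rw [Finset.sum_Icc_succ_top (by omega), mul_add, ih]
    ring

private lemma edge_img' (n : ℕ) : (completeBipartiteGraph (Fin 1) (Fin n)).edgeSet.toFinset
    = Finset.univ.image (fun j : Fin n => s(Sum.inl 0, Sum.inr j)) := by
  ext e
  induction e using Sym2.ind with
  | _ u v =>
    simp only [Set.mem_toFinset, SimpleGraph.mem_edgeSet, completeBipartiteGraph_adj,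
      Finset.mem_image, Finset.mem_univ, true_and]
    constructor
    · rintro (⟨hu, hv⟩ | ⟨hu, hv⟩)
      · obtain ⟨a, rfl⟩ := Sum.isLeft_iff.mp hu
        obtain ⟨b, rfl⟩ := Sum.isRight_iff.mp hv
        exact ⟨b, by rw [Fin.fin_one_eq_zero a]⟩
      · obtain ⟨b, rfl⟩ := Sum.isRight_iff.mp hu
        obtain ⟨a, rfl⟩ := Sum.isLeft_iff.mp hv
        exact ⟨b, by rw [Fin.fin_one_eq_zero a, Sym2.eq_swap]⟩
    · rintro ⟨j, hj⟩
      rw [Sym2.eq_iff] at hj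
      rcases hj with ⟨rfl, rfl⟩ | ⟨rfl, rfl⟩ <;> simp

open Finset in
private lemma mw_eq' (n : ℕ) (f : (Fin 1 ⊕ Fin n) ≃ Fin (n + 1)) :
    mw (completeBipartiteGraph (Fin 1) (Fin n)) (fun v => (f v : ℕ) + 1)
      = ∑ k ∈ range (n+1), (((f (Sum.inl 0) : ℕ) : ℤ) - k).natAbs := by
  set c : Fin (n+1) := f (Sum.inl 0) with hc
  rw [mw, edge_img', Finset.sum_image (by
    intro a _ b _ h
    simpa [Sym2.eq_iff] using h)]
  simp only [Sym2.lift_mk]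
  have step1 : ∑ j : Fin n, ((((f (Sum.inl 0) : ℕ) + 1 : ℕ) : ℤ) - (((f (Sum.inr j) : ℕ) + 1 : ℕ) : ℤ)).natAbs
      = ∑ j : Fin n, (((c:ℕ):ℤ) - ((f (Sum.inr j) : ℕ):ℤ)).natAbs := by
    apply Finset.sum_congr rfl
    intro j _
    push_cast
    congr 1
    ring
  rw [step1]
  have himg : Finset.univ.image (fun j : Fin n => f (Sum.inr j)) = Finset.univ.erase c := by
    ext k
    simp only [Finset.mem_image, Finset.mem_univ, true_and, Finset.mem_erase, and_true]
    constructor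
    · rintro ⟨j, rfl⟩ h
      exact absurd (f.injective h.symm) (by simp)
    · intro hk
      rcases h : f.symm k with a | j
      · exfalso
        apply hk
        rw [hc, ← Fin.fin_one_eq_zero a, ← h, f.apply_symm_apply]
      · exact ⟨j, by rw [← h, f.apply_symm_apply]⟩
  have step2 : ∑ j : Fin n, (((c:ℕ):ℤ) - ((f (Sum.inr j) : ℕ):ℤ)).natAbs
      = ∑ k ∈ Finset.univ.erase c, (((c:ℕ):ℤ) - ((k:ℕ):ℤ)).natAbs := by
    rw [← himg, Finset.sum_image (by intro a _ b _ h; exact Sum.inr_injective (f.injective h))]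
  rw [step2]
  have step3 : ∑ k ∈ Finset.univ.erase c, (((c:ℕ):ℤ) - ((k:ℕ):ℤ)).natAbs
      = ∑ k : Fin (n+1), (((c:ℕ):ℤ) - ((k:ℕ):ℤ)).natAbs := by
    rw [← Finset.add_sum_erase _ _ (Finset.mem_univ c)]
    simp
  rw [step3, Fin.sum_univ_eq_sum_range (fun k => (((c:ℕ):ℤ) - (k:ℤ)).natAbs)]

open Finset in
private lemma cast_sum_natAbs (n c : ℕ) :
    ((∑ k ∈ range (n+1), ((c:ℤ) - k).natAbs : ℕ) : ℤ)
      = ∑ k ∈ range (n+1), |(c:ℤ) - k| := by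
  push_cast
  rfl

open Finset in
private lemma twoS (n c : ℕ) (h : c ≤ n) :
    2 * ((∑ k ∈ range (n+1), ((c:ℤ) - k).natAbs : ℕ) : ℤ)
      = c*(c+1) + ((n:ℤ)-c)*((n:ℤ)-c+1) := by
  rw [cast_sum_natAbs, key' c n h]

theorem stmt_13 {n : ℕ} (hn : 2 ≤ n) :
    IsLeast {m | ∃ f : (Fin 1 ⊕ Fin n) ≃ Fin (n + 1),
      mw (completeBipartiteGraph (Fin 1) (Fin n)) (fun v => (f v : ℕ) + 1) = m}
      ((n + 1) ^ 2 / 4) ∧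
    (Odd n → (n + 1) ^ 2 / 4 =
      2 * ∑ i ∈ Finset.Icc 1 ((n + 2) / 2 - 1), i + (n + 2) / 2) ∧
    (Even n → (n + 1) ^ 2 / 4 = 2 * ∑ i ∈ Finset.Icc 1 ((n + 2) / 2 - 1), i) := by
  refine ⟨⟨?_, ?_⟩, ?_, ?_⟩
  · -- membership: witness with center labeled n/2
    set c₀ : Fin (n+1) := ⟨n/2, by omega⟩ with hc₀
    obtain e₀ : (Fin 1 ⊕ Fin n) ≃ Fin (n+1) := Fintype.equivOfCardEq (by simp [Nat.add_comm])
    refine ⟨e₀.trans (Equiv.swap (e₀ (Sum.inl 0)) c₀), ?_⟩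
    rw [mw_eq']
    have hf0 : ((e₀.trans (Equiv.swap (e₀ (Sum.inl 0)) c₀)) (Sum.inl 0) : ℕ) = n/2 := by
      simp [Equiv.swap_apply_left, hc₀]
    rw [hf0]
    set S : ℕ := ∑ k ∈ Finset.range (n+1), (((n/2 : ℕ):ℤ) - k).natAbs with hS
    have h2S := twoS n (n/2) (by omega)
    rw [← hS] at h2S
    rcases Nat.even_or_odd n with ⟨m, rfl⟩ | ⟨m, rfl⟩
    · have hm : (m + m)/2 = m := by omega
      rw [hm] at h2S
      have hSval : (S : ℤ) = m*(m+1) := by push_cast at h2S ⊢; nlinarith [h2S]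
      have hSn : S = m*(m+1) := by exact_mod_cast hSval
      have hsq : (m + m + 1)^2 = 4*(m*(m+1)) + 1 := by ring
      omega
    · have hm : (2*m + 1)/2 = m := by omega
      rw [hm] at h2S
      have hSval : (S : ℤ) = (m+1)*(m+1) := by push_cast at h2S ⊢; nlinarith [h2S]
      have hSn : S = (m+1)*(m+1) := by exact_mod_cast hSval
      have hsq : (2*m + 1 + 1)^2 = 4*((m+1)*(m+1)) := by ring
      omega
  · -- lower bound
    rintro m ⟨f, rfl⟩
    rw [mw_eq']
    set c : ℕ := (f (Sum.inl 0) : ℕ) with hc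
    set S : ℕ := ∑ k ∈ Finset.range (n+1), ((c:ℤ) - k).natAbs with hS
    have hcle : c ≤ n := by
      have := (f (Sum.inl 0)).isLt
      omega
    have h2S := twoS n c hcle
    rw [← hS] at h2S
    have hineq : ((n:ℤ)+1)^2 ≤ 4 * (S:ℤ) + 1 := by nlinarith [sq_nonneg ((c:ℤ) - ((n:ℤ)-c)), h2S]
    have hineq' : (n+1)^2 ≤ 4 * S + 1 := by exact_mod_cast hineq
    omega
  · -- odd formula
    rintro ⟨m, rfl⟩
    have h1 : (2*m + 1 + 2)/2 - 1 = m := by omega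
    rw [h1]
    have hg := gauss2' m
    have hsq : (2*m + 1 + 1)^2 = 4*(m*(m+1)) + 4*(m+1) := by ring
    have h2 : (2*m + 1 + 2)/2 = m + 1 := by omega
    omega
  · -- even formula
    rintro ⟨m, rfl⟩
    have h1 : (m + m + 2)/2 - 1 = m := by omega
    rw [h1]
    have hg := gauss2' m
    have hsq : (m + m + 1)^2 = 4*(m*(m+1)) + 1 := by ring
    omega
end
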